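/- Let s(n) denote the number of explicit substitutions of size n in the λυ-calculus under the natural size notion. Then s(0)=0 and for n ≥ 1, s(n) equals the partial sum of Catalan numbers: s(n) = Σ_{k=0}^{n-1} C(k), where C(k) is the k-th Catalan number. -/

import Mathlib

open Finset Filter

mutual
inductive Tm : Type
  | idx : Nat → Tm
  | lam : Tm → Tm
  | app : Tm → Tm → Tm
  | clos : Tm → Subst → Tm
inductive Subst : Type
  | slash : Tm → Subst
  | lift : Subst → Subst
  | shift : Subst
end

mutual
/-- Natural size of a λυ-term: every constructor weighs 1; index n has size n+1. -/
def Tm.size : Tm → Nat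
  | .idx n => n + 1
  | .lam a => Tm.size a + 1
  | .app a b => Tm.size a + Tm.size b + 1
  | .clos a s => Tm.size a + Subst.size s + 1
/-- Natural size of an explicit substitution. -/
def Subst.size : Subst → Nat
  | .slash a => Tm.size a + 1
  | .lift s => Subst.size s + 1
  | .shift => 1
end

/-- Number of λυ-terms of size `n`. -/
noncomputable def tcount (n : ℕ) : ℕ := Nat.card {a : Tm // Tm.size a = n}

/-- Number of explicit substitutions of size `n`. -/
noncomputable def scount (n : ℕ) : ℕ := Nat.card {s : Subst // Subst.size s = n}

deriving instance DecidableEq for Tm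
deriving instance DecidableEq for Subst

lemma Tm.size_pos (a : Tm) : 1 ≤ a.size := by cases a <;> simp [Tm.size]
lemma Subst.size_pos (s : Subst) : 1 ≤ s.size := by cases s <;> simp [Subst.size]

def all : ℕ → Finset Tm × Finset Subst
  | 0 => (∅, ∅)
  | n + 1 =>
    ( {Tm.idx n} ∪ (all n).1.image Tm.lam ∪
        (Finset.range (n+1)).attach.biUnion (fun i =>
          ((all i.1).1 ×ˢ (all (n - i.1)).1).image fun p => Tm.app p.1 p.2) ∪
        (Finset.range (n+1)).attach.biUnion (fun i =>
          ((all i.1).1 ×ˢ (all (n - i.1)).2).image fun p => Tm.clos p.1 p.2),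
      (all n).1.image Subst.slash ∪ (all n).2.image Subst.lift ∪
        (if n = 0 then {Subst.shift} else ∅) )
decreasing_by all_goals (first | omega | (have := (Finset.mem_range).1 i.2; omega))

lemma mem_all (n : ℕ) :
    (∀ a : Tm, a ∈ (all n).1 ↔ a.size = n) ∧ (∀ s : Subst, s ∈ (all n).2 ↔ s.size = n) := by
  induction n using Nat.strong_induction_on with
  | _ n ih =>
    match n with
    | 0 =>
      constructor <;> intro x <;> simp [all] <;> (have := x.size_pos; omega)
    | n + 1 =>
      constructor
      · intro a
        rw [all]
        cases a with
        | idx m => simp [Tm.size]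
        | lam b => simp [Tm.size, (ih n (by omega)).1]
        | app b c =>
          simp only [Finset.mem_union, Finset.mem_singleton, Finset.mem_image,
            Finset.mem_biUnion, Finset.mem_attach, Finset.mem_product, true_and,
            Subtype.exists, Finset.mem_range, Prod.exists, Tm.size]
          constructor
          · rintro (((h | ⟨w, hw, h⟩) | ⟨i, hi, x, y, ⟨hx, hy⟩, h⟩) | ⟨i, hi, x, y, ⟨hx, hy⟩, h⟩)
            · exact absurd h (by simp)
            · exact absurd h (by simp)
            · cases h
              rw [(ih i (by omega)).1] at hx
              rw [(ih (n - i) (by omega)).1] at hy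
              omega
            · exact absurd h (by simp)
          · intro h
            refine Or.inl (Or.inr ⟨b.size, ?_, b, c, ⟨?_, ?_⟩, rfl⟩)
            · have := c.size_pos; omega
            · exact (ih b.size (by have := c.size_pos; omega)).1 b |>.mpr rfl
            · rw [(ih (n - b.size) (by have := b.size_pos; omega)).1]
              have := b.size_pos; have := c.size_pos; omega
        | clos b s =>
          simp only [Finset.mem_union, Finset.mem_singleton, Finset.mem_image,
            Finset.mem_biUnion, Finset.mem_attach, Finset.mem_product, true_and,
            Subtype.exists, Finset.mem_range, Prod.exists, Tm.size]
          constructor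
          · rintro (((h | ⟨w, hw, h⟩) | ⟨i, hi, x, y, ⟨hx, hy⟩, h⟩) | ⟨i, hi, x, y, ⟨hx, hy⟩, h⟩)
            · exact absurd h (by simp)
            · exact absurd h (by simp)
            · exact absurd h (by simp)
            · cases h
              rw [(ih i (by omega)).1] at hx
              rw [(ih (n - i) (by omega)).2] at hy
              omega
          · intro h
            refine Or.inr ⟨b.size, ?_, b, s, ⟨?_, ?_⟩, rfl⟩
            · have := s.size_pos; omega
            · exact (ih b.size (by have := s.size_pos; omega)).1 b |>.mpr rfl
            · rw [(ih (n - b.size) (by have := b.size_pos; omega)).2]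
              have := b.size_pos; have := s.size_pos; omega
      · intro s
        rw [all]
        cases s with
        | slash b =>
          rcases Nat.eq_zero_or_pos n with h | h
          · subst h; simp [Subst.size, (ih 0 (by omega)).1]
          · have hne : n ≠ 0 := by omega
            simp [Subst.size, (ih n (by omega)).1, hne]
        | lift t =>
          rcases Nat.eq_zero_or_pos n with h | h
          · subst h; simp [Subst.size, (ih 0 (by omega)).2]
          · have hne : n ≠ 0 := by omega
            simp [Subst.size, (ih n (by omega)).2, hne]
        | shift =>
          rcases Nat.eq_zero_or_pos n with h | h
          · subst h; simp [Subst.size]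
          · have hne : n ≠ 0 := by omega
            simp [Subst.size, hne]

lemma app_inj : Function.Injective (fun p : Tm × Tm => Tm.app p.1 p.2) := by
  rintro ⟨a, b⟩ ⟨c, d⟩ h
  simpa [Prod.ext_iff] using h

lemma clos_inj : Function.Injective (fun p : Tm × Subst => Tm.clos p.1 p.2) := by
  rintro ⟨a, b⟩ ⟨c, d⟩ h
  simpa [Prod.ext_iff] using h

lemma card_snd (n : ℕ) :
    (all (n+1)).2.card = (all n).1.card + (all n).2.card + (if n = 0 then 1 else 0) := by
  rw [all]
  rw [Finset.card_union_of_disjoint, Finset.card_union_of_disjoint]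
  · rw [Finset.card_image_of_injective _ (fun a b h => by simpa using h),
      Finset.card_image_of_injective _ (fun a b h => by simpa using h)]
    split <;> simp
  · simp [Finset.disjoint_left]
  · rw [Finset.disjoint_left]
    rintro x hx h
    split at h <;> simp_all

lemma card_fst (n : ℕ) :
    (all (n+1)).1.card = 1 + (all n).1.card
      + ∑ i ∈ Finset.range (n+1), (all i).1.card * (all (n-i)).1.card
      + ∑ i ∈ Finset.range (n+1), (all i).1.card * (all (n-i)).2.card := by
  rw [all]
  rw [Finset.card_union_of_disjoint, Finset.card_union_of_disjoint,
    Finset.card_union_of_disjoint]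
  · congr 1
    · congr 1
      · congr 1
        exact Finset.card_image_of_injective _ (fun a b h => by simpa using h)
      · rw [Finset.card_biUnion]
        · rw [← Finset.sum_attach (Finset.range (n+1))
            (fun i => (all i).1.card * (all (n-i)).1.card)]
          refine Finset.sum_congr rfl fun i _ => ?_
          rw [Finset.card_image_of_injective _ app_inj, Finset.card_product]
        · rintro ⟨i, hi⟩ - ⟨j, hj⟩ - hij
          rw [Function.onFun, Finset.disjoint_left]
          rintro x hx hx'
          simp only [Finset.mem_image, Finset.mem_product, Prod.exists] at hx hx'
          obtain ⟨a, b, ⟨ha, -⟩, rfl⟩ := hx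
          obtain ⟨c, d, ⟨hc, -⟩, he⟩ := hx'
          cases he
          rw [(mem_all i).1] at ha
          rw [(mem_all j).1] at hc
          exact hij (by simp [Subtype.ext_iff]; omega)
    · rw [Finset.card_biUnion]
      · rw [← Finset.sum_attach (Finset.range (n+1))
          (fun i => (all i).1.card * (all (n-i)).2.card)]
        refine Finset.sum_congr rfl fun i _ => ?_
        rw [Finset.card_image_of_injective _ clos_inj, Finset.card_product]
      · rintro ⟨i, hi⟩ - ⟨j, hj⟩ - hij
        rw [Function.onFun, Finset.disjoint_left]
        rintro x hx hx'
        simp only [Finset.mem_image, Finset.mem_product, Prod.exists] at hx hx'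
        obtain ⟨a, b, ⟨ha, -⟩, rfl⟩ := hx
        obtain ⟨c, d, ⟨hc, -⟩, he⟩ := hx'
        cases he
        rw [(mem_all i).1] at ha
        rw [(mem_all j).1] at hc
        exact hij (by simp [Subtype.ext_iff]; omega)
  · simp [Finset.disjoint_left]
  · rw [Finset.disjoint_left]
    rintro x hx h
    simp only [Finset.mem_biUnion, Finset.mem_attach, Finset.mem_image,
      Finset.mem_product, Prod.exists, true_and, Subtype.exists] at h
    obtain ⟨i, hi, a, b, -, rfl⟩ := h
    simp at hx
  · rw [Finset.disjoint_left]
    rintro x hx h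
    simp only [Finset.mem_biUnion, Finset.mem_attach, Finset.mem_image,
      Finset.mem_product, Prod.exists, true_and, Subtype.exists] at h
    obtain ⟨i, hi, a, b, -, rfl⟩ := h
    simp at hx

lemma tcount_eq (n : ℕ) : tcount n = (all n).1.card := by
  rw [tcount, Nat.card_congr (Equiv.subtypeEquivRight (fun a => ((mem_all n).1 a).symm))]
  simp [Nat.card_eq_fintype_card]

lemma scount_eq (n : ℕ) : scount n = (all n).2.card := by
  rw [scount, Nat.card_congr (Equiv.subtypeEquivRight (fun s => ((mem_all n).2 s).symm))]
  simp [Nat.card_eq_fintype_card]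

lemma tcount_zero : tcount 0 = 0 := by rw [tcount_eq]; simp [all]
lemma scount_zero : scount 0 = 0 := by rw [scount_eq]; simp [all]

lemma tcount_succ (n : ℕ) :
    tcount (n+1) = 1 + tcount n
      + ∑ i ∈ Finset.range (n+1), tcount i * tcount (n-i)
      + ∑ i ∈ Finset.range (n+1), tcount i * scount (n-i) := by
  simp only [tcount_eq, scount_eq, card_fst]

lemma scount_succ (n : ℕ) :
    scount (n+1) = tcount n + scount n + (if n = 0 then 1 else 0) := by
  simp only [tcount_eq, scount_eq, card_snd]

lemma sum_cat_conv (n : ℕ) :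
    ∑ i ∈ Finset.range (n+1), catalan i * catalan (n - i) = catalan (n+1) := by
  rw [catalan_succ]
  exact (Fin.sum_univ_eq_sum_range (fun i => catalan i * catalan (n-i)) (n+1)).symm

lemma G : ∀ n : ℕ, 1 ≤ n → catalan n
    = 1 + ∑ i ∈ Finset.range (n+1),
        (if i = 0 then 0 else catalan i) * ∑ j ∈ Finset.range (n - i), catalan j := by
  intro n hn
  induction n, hn using Nat.le_induction with
  | base => simp [Finset.sum_range_succ, catalan_one]
  | succ n hn ih =>
    have peel : ∑ i ∈ Finset.range (n+2),
        (if i = 0 then 0 else catalan i) * ∑ j ∈ Finset.range (n + 1 - i), catalan j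
      = ∑ i ∈ Finset.range (n+1),
          ((if i = 0 then 0 else catalan i) * ∑ j ∈ Finset.range (n - i), catalan j
            + (if i = 0 then 0 else catalan i) * catalan (n - i)) := by
      rw [Finset.sum_range_succ]
      simp only [Nat.sub_self, Finset.range_zero, Finset.sum_empty, mul_zero, add_zero]
      refine Finset.sum_congr rfl fun i hi => ?_
      have hi' : i ≤ n := by simpa [Nat.lt_succ_iff] using hi
      rw [show n + 1 - i = (n - i) + 1 by omega, Finset.sum_range_succ, mul_add]
    rw [peel, Finset.sum_add_distrib]
    have hc : ∑ i ∈ Finset.range (n+1), (if i = 0 then 0 else catalan i) * catalan (n - i)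
        + catalan n = catalan (n+1) := by
      have h := sum_cat_conv n
      rw [Finset.sum_range_succ'] at h ⊢
      simp only [Nat.succ_ne_zero, if_false, reduceIte, zero_mul, add_zero,
        Nat.sub_zero, catalan_zero, one_mul, zero_add] at h ⊢
      omega
    omega

lemma conv_tt (n : ℕ) (hn : 1 ≤ n) :
    ∑ i ∈ Finset.range (n+1),
        (if i = 0 then 0 else catalan i) * (if n - i = 0 then 0 else catalan (n-i))
      + (catalan n + catalan n) = catalan (n+1) := by
  obtain ⟨m, rfl⟩ : ∃ m, n = m + 1 := ⟨n - 1, by omega⟩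
  have h := sum_cat_conv (m+1)
  rw [Finset.sum_range_succ, Finset.sum_range_succ'] at h ⊢
  have e1 : ∑ i ∈ Finset.range m,
      (if i + 1 = 0 then 0 else catalan (i+1)) * (if m + 1 - (i+1) = 0 then 0 else catalan (m+1-(i+1)))
      = ∑ i ∈ Finset.range m, catalan (i+1) * catalan (m - i) := by
    refine Finset.sum_congr rfl fun i hi => ?_
    have hi' : i < m := Finset.mem_range.1 hi
    rw [if_neg (Nat.succ_ne_zero _), show m + 1 - (i+1) = m - i by omega,
      if_neg (by omega)]
  have e2 : ∑ i ∈ Finset.range m, catalan (i+1) * catalan (m + 1 - (i+1))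
      = ∑ i ∈ Finset.range m, catalan (i+1) * catalan (m - i) := by
    refine Finset.sum_congr rfl fun i hi => ?_
    have hi' : i < m := Finset.mem_range.1 hi
    rw [show m + 1 - (i+1) = m - i by omega]
  rw [e1] at *
  rw [e2] at h
  simp only [Nat.succ_ne_zero, if_false, reduceIte, zero_mul, mul_zero,
    Nat.sub_self, Nat.sub_zero, add_zero, zero_add, catalan_zero, one_mul, mul_one] at h ⊢
  omega

lemma main_count (n : ℕ) :
    tcount n = (if n = 0 then 0 else catalan n)
      ∧ scount n = ∑ k ∈ Finset.range n, catalan k := by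
  induction n using Nat.strong_induction_on with
  | _ n ih =>
    match n with
    | 0 => simp [tcount_zero, scount_zero]
    | n + 1 =>
      have ht : tcount n = (if n = 0 then 0 else catalan n) := (ih n (by omega)).1
      have hs : scount n = ∑ k ∈ Finset.range n, catalan k := (ih n (by omega)).2
      have hS : scount (n+1) = ∑ k ∈ Finset.range (n+1), catalan k := by
        rw [scount_succ, ht, hs]
        rcases Nat.eq_zero_or_pos n with h | h
        · subst h; simp
        · rw [if_neg (by omega), if_neg (by omega), Finset.sum_range_succ]
          omega
      refine ⟨?_, hS⟩
      rw [if_neg (Nat.succ_ne_zero n), tcount_succ, ht]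
      have h1 : ∑ i ∈ Finset.range (n+1), tcount i * tcount (n-i)
          = ∑ i ∈ Finset.range (n+1),
              (if i = 0 then 0 else catalan i) * (if n - i = 0 then 0 else catalan (n-i)) := by
        refine Finset.sum_congr rfl fun i hi => ?_
        rw [(ih i (by have := Finset.mem_range.1 hi; omega)).1, (ih (n-i) (by omega)).1]
      have h2 : ∑ i ∈ Finset.range (n+1), tcount i * scount (n-i)
          = ∑ i ∈ Finset.range (n+1),
              (if i = 0 then 0 else catalan i) * ∑ j ∈ Finset.range (n - i), catalan j := by
        refine Finset.sum_congr rfl fun i hi => ?_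
        rw [(ih i (by have := Finset.mem_range.1 hi; omega)).1, (ih (n-i) (by omega)).2]
      rw [h1, h2]
      rcases Nat.eq_zero_or_pos n with h | h
      · subst h; simp [catalan_one]
      · rw [if_neg (by omega)]
        have hA := conv_tt n h
        have hG := G n h
        omega

/-- s(0)=0 and for n ≥ 1, s(n) = Σ_{k=0}^{n-1} C(k). -/
theorem stmt1 :
    scount 0 = 0 ∧
      ∀ n : ℕ, 1 ≤ n → scount n = ∑ k ∈ Finset.range n, (Nat.choose (2 * k) k) / (k + 1) := by
  refine ⟨scount_zero, fun n hn => ?_⟩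
  rw [(main_count n).2]
  refine Finset.sum_congr rfl fun k _ => ?_
  rw [catalan_eq_centralBinom_div, Nat.centralBinom]
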